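/- The Whitney numbers of the first kind of ℰ^n are the signed Stirling numbers of the first kind shifted by one: for 0 ≤ k ≤ n, the sum of μ_{ℰ^N}((∅,P_⊥),(A,P)) over all embedded subsets (A,P) ∈ ℰ^N of rank k equals s_{n+1, n+1−k}, the signed Stirling number of the first kind. -/

import Mathlib

open scoped BigOperators

/-- `modp n A` is the modular partition `P^A_⊥` of `Fin n` whose unique (possibly)
non-singleton block is `A`, all other blocks being singletons. -/
def modp (n : ℕ) (A : Set (Fin n)) : Setoid (Fin n) where
  r x y := x = y ∨ (x ∈ A ∧ y ∈ A)
  iseqv := by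
    refine ⟨fun _ => Or.inl rfl, ?_, ?_⟩
    · rintro x y (rfl | ⟨hx, hy⟩)
      · exact Or.inl rfl
      · exact Or.inr ⟨hy, hx⟩
    · rintro x y z (rfl | ⟨hx, hy⟩) h
      · exact h
      · rcases h with rfl | ⟨hy', hz⟩
        · exact Or.inr ⟨hx, hy⟩
        · exact Or.inr ⟨hx, hz⟩

/-- The product `X^N = 2^N × 𝒫^N` of the subset lattice and the partition lattice,
ordered componentwise. -/
abbrev XN (n : ℕ) := Set (Fin n) × Setoid (Fin n)

/-- The closure operator `cl` on `X^N`:  `cl(∅,P) = (∅,P)` and, for `A ≠ ∅`,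
`cl(A,P) = (Ā, P ⊔ P^A_⊥)` where `Ā` is the block of `P ⊔ P^A_⊥` containing `A`. -/
def EmbClosure (n : ℕ) (x : XN n) : XN n :=
  ({y | ∃ a ∈ x.1, (x.2 ⊔ modp n x.1) y a}, x.2 ⊔ modp n x.1)

/-- An embedded subset is a pair that coincides with its closure. -/
def IsEmbedded (n : ℕ) (x : XN n) : Prop := EmbClosure n x = x

/-- The lattice `ℰ^N` of embedded subsets, with the induced order. -/
abbrev Emb (n : ℕ) := {x : XN n // IsEmbedded n x}

lemma modp_le_of_subsingleton {n : ℕ} {A : Set (Fin n)} (h : A.Subsingleton)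
    (Q : Setoid (Fin n)) : modp n A ≤ Q := by
  rw [Setoid.le_def]
  intro x y hxy
  rcases hxy with rfl | ⟨hx, hy⟩
  · exact Q.refl' x
  · obtain rfl := h hx hy
    exact Q.refl' x

lemma modp_eq_bot_of_subsingleton {n : ℕ} {A : Set (Fin n)} (h : A.Subsingleton) :
    modp n A = ⊥ :=
  le_antisymm (modp_le_of_subsingleton h ⊥) bot_le

lemma embedded_empty (n : ℕ) (Q : Setoid (Fin n)) : IsEmbedded n (∅, Q) := by
  unfold IsEmbedded EmbClosure
  refine Prod.ext ?_ ?_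
  · simp
  · simpa using sup_eq_left.mpr (modp_le_of_subsingleton Set.subsingleton_empty Q)

lemma embedded_univ_top (n : ℕ) : IsEmbedded n (Set.univ, ⊤) := by
  unfold IsEmbedded EmbClosure
  refine Prod.ext ?_ ?_
  · ext y
    simp only [Set.mem_setOf_eq, Set.mem_univ, iff_true]
    exact ⟨y, trivial, Setoid.refl' _ y⟩
  · exact sup_eq_left.mpr le_top

lemma embedded_singleton (n : ℕ) (i : Fin n) : IsEmbedded n ({i}, ⊥) := by
  have hb : modp n ({i} : Set (Fin n)) = ⊥ :=
    modp_eq_bot_of_subsingleton Set.subsingleton_singleton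
  unfold IsEmbedded EmbClosure
  refine Prod.ext ?_ ?_
  · ext y
    simp only [Set.mem_setOf_eq, hb, sup_idem, Set.mem_singleton_iff]
    constructor
    · rintro ⟨a, ha, hrel⟩
      subst ha
      rw [modp_eq_bot_of_subsingleton Set.subsingleton_singleton, sup_idem] at hrel
      exact hrel
    · rintro rfl
      exact ⟨y, rfl, Setoid.refl' _ y⟩
  · simp [hb]

/-- The bottom element `(∅, P_⊥)` of `ℰ^N`. -/
def botE (n : ℕ) : Emb n := ⟨(∅, ⊥), embedded_empty n ⊥⟩

/-- The top element `(N, P^⊤)` of `ℰ^N`. -/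
def topE (n : ℕ) : Emb n := ⟨(Set.univ, ⊤), embedded_univ_top n⟩

/-- The atom `({i}, P_⊥)` of `ℰ^N`. -/
def atomS (n : ℕ) (i : Fin n) : Emb n := ⟨({i}, ⊥), embedded_singleton n i⟩

/-- The atom `(∅, [ij])` of `ℰ^N`, where `[ij]` is the atom of the partition lattice
whose unique non-singleton block is the pair `{i, j}`. -/
def atomP (n : ℕ) (i j : Fin n) : Emb n := ⟨(∅, modp n {i, j}), embedded_empty n _⟩

/-- A pair is an atom candidate: of the form `({i},P_⊥)` or `(∅,[ij])` with `i ≠ j`. -/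
def IsAtomPair (n : ℕ) (a : XN n) : Prop :=
  (∃ i : Fin n, a = ({i}, ⊥)) ∨ ∃ i j : Fin n, i ≠ j ∧ a = (∅, modp n {i, j})

/-- The number of blocks `|P|` of a partition. -/
noncomputable def numBlocks {α : Type*} (P : Setoid α) : ℕ := P.classes.ncard

/-- The rank function `r(A,P) = (n − |P|) + min{|A|,1}` of `ℰ^N`. -/
noncomputable def erank (n : ℕ) (x : XN n) : ℕ := (n - numBlocks x.2) + min x.1.ncard 1

/-- The partition `Q^S` of `S` induced by a partition `Q` of `N`. -/
def indPart {n : ℕ} (S : Set (Fin n)) (Q : Setoid (Fin n)) : Setoid S :=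
  Setoid.comap Subtype.val Q

/-- `mu` is the Möbius function of the (finite) poset `α`. -/
def IsMobius {α : Type*} [PartialOrder α] (mu : α → α → ℤ) : Prop :=
  (∀ x, mu x x = 1) ∧
  (∀ x y, ¬x ≤ y → mu x y = 0) ∧
  (∀ x y, x < y → mu x y = -∑ᶠ z ∈ Set.Ico x y, mu x z)

/-! ### Auxiliary development -/

section AuxWhitney

open Classical

instance setoidFinite {m : ℕ} : Finite (Setoid (Fin m)) := by
  apply Finite.of_injective (fun s : Setoid (Fin m) => ⇑s)
  intro a b h
  ext x y; exact iff_of_eq (congrFun (congrFun h x) y)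

noncomputable instance embFintype {n : ℕ} : Fintype (Emb n) := Fintype.ofFinite _

variable {n : ℕ}

lemma emb_modp_le (x : Emb n) : modp n x.val.1 ≤ x.val.2 := by
  have h := congrArg Prod.snd x.2
  simp only [EmbClosure] at h
  exact sup_eq_left.mp h

lemma emb_sup_eq (x : Emb n) : x.val.2 ⊔ modp n x.val.1 = x.val.2 :=
  sup_eq_left.mpr (emb_modp_le x)

lemma emb_set_eq (x : Emb n) : {y | ∃ a ∈ x.val.1, x.val.2 y a} = x.val.1 := by
  have h := congrArg Prod.fst x.2
  simp only [EmbClosure] at h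
  rw [emb_sup_eq x] at h
  exact h

lemma emb_block {x : Emb n} {a : Fin n} (ha : a ∈ x.val.1) :
    x.val.1 = {y | x.val.2 y a} := by
  ext y
  constructor
  · intro hy
    exact (emb_modp_le x) (Or.inr ⟨hy, ha⟩)
  · intro hy
    rw [← emb_set_eq x]
    exact ⟨a, ha, hy⟩

lemma numBlocks_eq_card (P : Setoid (Fin n)) : numBlocks P = Nat.card (Quotient P) := by
  rw [numBlocks, ← Nat.card_coe_set_eq, Nat.card_congr P.quotientEquivClasses.symm]

lemma numBlocks_le (P : Setoid (Fin n)) : numBlocks P ≤ n := by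
  rw [numBlocks_eq_card]
  calc Nat.card (Quotient P) ≤ Nat.card (Fin n) :=
        Nat.card_le_card_of_surjective _ (Quotient.mk''_surjective)
    _ = n := by simp

lemma botE_le (x : Emb n) : botE n ≤ x := by
  refine Subtype.coe_le_coe.mp ?_
  exact ⟨by simp [botE], by simp [botE]⟩

end AuxWhitney
section AuxWhitney2

open Classical

variable {n : ℕ}

/-- The embedded subset attached to a coloring `(g, c)`. -/
def EfX (n t : ℕ) (g : Fin n → Fin t) (c : Fin t) : XN n := ({i | g i = c}, Setoid.ker g)

lemma modp_le_ker (t : ℕ) (g : Fin n → Fin t) (c : Fin t) :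
    modp n {i | g i = c} ≤ Setoid.ker g := by
  rintro x y (rfl | ⟨hx, hy⟩)
  · exact rfl
  · show g x = g y
    rw [Set.mem_setOf_eq] at hx hy
    rw [hx, hy]

lemma EfX_embedded (t : ℕ) (g : Fin n → Fin t) (c : Fin t) : IsEmbedded n (EfX n t g c) := by
  unfold IsEmbedded EmbClosure EfX
  have hsup : Setoid.ker g ⊔ modp n {i | g i = c} = Setoid.ker g :=
    sup_eq_left.mpr (modp_le_ker t g c)
  refine Prod.ext ?_ (by simpa using hsup)
  simp only [hsup]
  ext y
  simp only [Set.mem_setOf_eq]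
  constructor
  · rintro ⟨a, ha, hrel⟩
    have : g y = g a := by
      have h' : (Setoid.ker g ⊔ modp n {i | g i = c}) y a := hrel
      rw [hsup] at h'
      exact h'
    rw [this]; exact ha
  · intro hy
    exact ⟨y, hy, Setoid.refl' _ y⟩

/-- The embedded subset attached to a coloring, as an element of `Emb n`. -/
def EfE (n t : ℕ) (p : (Fin n → Fin t) × Fin t) : Emb n := ⟨EfX n t p.1 p.2, EfX_embedded t p.1 p.2⟩

lemma le_EfE_iff (t : ℕ) (x : Emb n) (p : (Fin n → Fin t) × Fin t) :
    x ≤ EfE n t p ↔ (x.val.1 ⊆ {i | p.1 i = p.2} ∧ x.val.2 ≤ Setoid.ker p.1) :=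
  Iff.rfl

/-- Counting lemma: the number of colorings above an embedded subset. -/
lemma count_above (t : ℕ) (x : Emb n) :
    Nat.card {p : (Fin n → Fin t) × Fin t // x ≤ EfE n t p} = t ^ (n + 1 - erank n x.val) := by
  obtain ⟨⟨A, P⟩, hx⟩ := x
  by_cases hA : A = ∅
  · subst hA
    -- equiv with (Quotient P → Fin t) × Fin t
    have e : {p : (Fin n → Fin t) × Fin t // (⟨(∅, P), hx⟩ : Emb n) ≤ EfE n t p} ≃
        (Quotient P → Fin t) × Fin t := by
      refine
        { toFun := fun q => (Quotient.lift q.val.1 (fun a b hab => q.prop.2 hab), q.val.2)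
          invFun := fun q => ⟨(fun i => q.1 ⟦i⟧, q.2), ⟨by simp, fun a b hab => ?_⟩⟩
          left_inv := ?_
          right_inv := ?_ }
      · show q.1 ⟦a⟧ = q.1 ⟦b⟧
        exact congrArg q.1 (Quotient.sound hab)
      · rintro ⟨⟨g, c⟩, h⟩
        rfl
      · rintro ⟨h, c⟩
        refine Prod.ext ?_ rfl
        funext q
        induction q using Quotient.ind
        rfl
    rw [Nat.card_congr e, Nat.card_prod, Nat.card_fun, Nat.card_eq_fintype_card (α := Fin t),
      Fintype.card_fin, ← numBlocks_eq_card]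
    have h1 : erank n ((∅ : Set (Fin n)), P) = n - numBlocks P := by
      simp [erank]
    rw [h1]
    have h2 := numBlocks_le P
    have : n + 1 - (n - numBlocks P) = numBlocks P + 1 := by omega
    rw [this, pow_succ]
  · obtain ⟨a₀, ha₀⟩ := Set.nonempty_iff_ne_empty.mpr hA
    have hblock := emb_block (x := ⟨(A, P), hx⟩) ha₀
    simp only at hblock
    have e : {p : (Fin n → Fin t) × Fin t // (⟨(A, P), hx⟩ : Emb n) ≤ EfE n t p} ≃
        (Quotient P → Fin t) := by
      refine
        { toFun := fun q => Quotient.lift q.val.1 (fun a b hab => q.prop.2 hab)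
          invFun := fun h => ⟨(fun i => h ⟦i⟧, h ⟦a₀⟧), ⟨?_, fun a b hab => ?_⟩⟩
          left_inv := ?_
          right_inv := ?_ }
      · intro i hi
        show h ⟦i⟧ = h ⟦a₀⟧
        have hi' : i ∈ A := hi
        rw [hblock] at hi'
        exact congrArg h (Quotient.sound hi')
      · show h ⟦a⟧ = h ⟦b⟧
        exact congrArg h (Quotient.sound hab)
      · rintro ⟨⟨g, c⟩, hsub, hle⟩
        refine Subtype.ext (Prod.ext rfl ?_)
        show g a₀ = c
        exact hsub ha₀
      · intro h
        funext q
        induction q using Quotient.ind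
        rfl
    rw [Nat.card_congr e, Nat.card_fun, Nat.card_eq_fintype_card (α := Fin t),
      Fintype.card_fin, ← numBlocks_eq_card]
    have h1 : erank n ((A : Set (Fin n)), P) = n - numBlocks P + 1 := by
      have : 0 < A.ncard := (Set.ncard_pos (Set.toFinite A)).mpr ⟨a₀, ha₀⟩
      simp only [erank]
      omega
    rw [h1]
    have h2 := numBlocks_le P
    congr 1
    omega
end AuxWhitney2
section AuxWhitney3

open Classical

variable {n : ℕ}

lemma EfE_eq_botE_iff (t : ℕ) (p : (Fin n → Fin t) × Fin t) :
    EfE n t p = botE n ↔ (∀ i, p.1 i ≠ p.2) ∧ Function.Injective p.1 := by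
  constructor
  · intro h
    have h1 := congrArg (fun z : Emb n => z.val.1) h
    have h2 := congrArg (fun z : Emb n => z.val.2) h
    simp only [EfE, EfX, botE] at h1 h2
    constructor
    · intro i hi
      have : i ∈ ({j | p.1 j = p.2} : Set (Fin n)) := hi
      rw [h1] at this
      exact this
    · intro a b hab
      have : (Setoid.ker p.1) a b := hab
      rw [h2] at this
      simpa [Setoid.bot_def] using this
  · rintro ⟨h1, h2⟩
    refine Subtype.ext (Prod.ext ?_ ?_)
    · show ({i | p.1 i = p.2} : Set (Fin n)) = ∅
      ext i
      simp [h1 i]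
    · show Setoid.ker p.1 = ⊥
      ext a b
      constructor
      · intro hab
        have : p.1 a = p.1 b := hab
        simpa [Setoid.bot_def] using h2 this
      · intro hab
        have : a = b := by simpa [Setoid.bot_def] using hab
        subst this; exact rfl

lemma count_inj (t : ℕ) :
    Nat.card {p : (Fin n → Fin t) × Fin t // EfE n t p = botE n} = t.descFactorial (n + 1) := by
  have e : {p : (Fin n → Fin t) × Fin t // EfE n t p = botE n} ≃ (Fin (n + 1) ↪ Fin t) := by
    refine
      { toFun := fun q => ⟨Fin.snoc q.val.1 q.val.2, ?_⟩
        invFun := fun f => ⟨(fun i => f i.castSucc, f (Fin.last n)), ?_⟩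
        left_inv := ?_
        right_inv := ?_ }
    · obtain ⟨h1, h2⟩ := (EfE_eq_botE_iff t q.val).mp q.prop
      intro a b hab
      induction a using Fin.lastCases with
      | last =>
        induction b using Fin.lastCases with
        | last => rfl
        | cast b =>
          rw [Fin.snoc_last, Fin.snoc_castSucc] at hab
          exact absurd hab.symm (h1 b)
      | cast a =>
        induction b using Fin.lastCases with
        | last =>
          rw [Fin.snoc_last, Fin.snoc_castSucc] at hab
          exact absurd hab (h1 a)
        | cast b =>
          rw [Fin.snoc_castSucc, Fin.snoc_castSucc] at hab
          rw [h2 hab]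
    · rw [EfE_eq_botE_iff]
      refine ⟨fun i hi => ?_, fun a b hab => ?_⟩
      · exact absurd (f.injective hi) (Fin.castSucc_lt_last i).ne
      · exact Fin.castSucc_injective n (f.injective hab)
    · rintro ⟨⟨g, c⟩, h⟩
      refine Subtype.ext (Prod.ext ?_ ?_)
      · funext i; simp
      · simp
    · intro f
      ext i
      simp only [Function.Embedding.coeFn_mk]
      induction i using Fin.lastCases with
      | last => simp
      | cast i => simp
  rw [Nat.card_congr e, Nat.card_eq_fintype_card, Fintype.card_embedding_eq]
  simp

lemma mobius_sum_le (mu : Emb n → Emb n → ℤ) (hmu : IsMobius mu) (y : Emb n) :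
    ∑ x ∈ Finset.univ.filter (· ≤ y), mu (botE n) x = if y = botE n then 1 else 0 := by
  by_cases hy : y = botE n
  · subst hy
    have : Finset.univ.filter (· ≤ botE n) = {botE n} := by
      ext z
      simp only [Finset.mem_filter, Finset.mem_univ, true_and, Finset.mem_singleton]
      exact ⟨fun h => le_antisymm h (botE_le z), fun h => h.le⟩
    rw [this, Finset.sum_singleton, hmu.1, if_pos rfl]
  · have hlt : botE n < y := lt_of_le_of_ne (botE_le y) (Ne.symm hy)
    have hrec := hmu.2.2 _ _ hlt
    have hico : Set.Ico (botE n) y = ↑(Finset.univ.filter (· < y)) := by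
      ext z
      simp only [Set.mem_Ico, Finset.coe_filter, Finset.mem_univ, true_and, Set.mem_setOf_eq]
      exact ⟨fun h => h.2, fun h => ⟨botE_le z, h⟩⟩
    rw [hico, finsum_mem_coe_finset] at hrec
    have hsplit : Finset.univ.filter (· ≤ y) = insert y (Finset.univ.filter (· < y)) := by
      ext z
      rw [Finset.mem_filter, Finset.mem_insert, Finset.mem_filter]
      constructor
      · rintro ⟨-, h⟩
        rcases eq_or_lt_of_le h with h' | h'
        · exact Or.inl h'
        · exact Or.inr ⟨Finset.mem_univ z, h'⟩
      · rintro (rfl | ⟨-, h⟩)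
        · exact ⟨Finset.mem_univ z, le_refl z⟩
        · exact ⟨Finset.mem_univ z, h.le⟩
    rw [hsplit, Finset.sum_insert (by simp), hrec, if_neg hy]
    ring

end AuxWhitney3
section AuxWhitney4

open Classical Polynomial

variable {n : ℕ}

lemma erank_le (x : XN n) : erank n x ≤ n + 1 := by
  have h1 : n - numBlocks x.2 ≤ n := Nat.sub_le _ _
  have h2 : min x.1.ncard 1 ≤ 1 := min_le_right _ _
  simp only [erank]
  omega

lemma eval_identity (mu : Emb n → Emb n → ℤ) (hmu : IsMobius mu) (t : ℕ) :
    ∑ x : Emb n, mu (botE n) x * (t : ℤ) ^ (n + 1 - erank n x.val) =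
      (t.descFactorial (n + 1) : ℤ) := by
  have step1 : ∀ x : Emb n, (t : ℤ) ^ (n + 1 - erank n x.val) =
      ∑ p : (Fin n → Fin t) × Fin t, if x ≤ EfE n t p then (1 : ℤ) else 0 := by
    intro x
    have h := count_above t x
    have h2 : Nat.card {p : (Fin n → Fin t) × Fin t // x ≤ EfE n t p} =
        (Finset.univ.filter (fun p => x ≤ EfE n t p)).card := by
      rw [Nat.card_eq_fintype_card, Fintype.card_subtype]
    rw [h2] at h
    have : ((t : ℤ)) ^ (n + 1 - erank n x.val) =
        (((Finset.univ.filter (fun p => x ≤ EfE n t p)).card : ℕ) : ℤ) := by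
      rw [h]; push_cast; ring
    rw [this, Finset.card_filter]
    push_cast
    rfl
  calc ∑ x : Emb n, mu (botE n) x * (t : ℤ) ^ (n + 1 - erank n x.val)
      = ∑ x : Emb n, ∑ p : (Fin n → Fin t) × Fin t,
          (if x ≤ EfE n t p then mu (botE n) x else 0) := by
        refine Finset.sum_congr rfl fun x _ => ?_
        rw [step1 x, Finset.mul_sum]
        exact Finset.sum_congr rfl fun p _ => by rw [mul_ite, mul_one, mul_zero]
    _ = ∑ p : (Fin n → Fin t) × Fin t, ∑ x : Emb n,
          (if x ≤ EfE n t p then mu (botE n) x else 0) := Finset.sum_comm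
    _ = ∑ p : (Fin n → Fin t) × Fin t, (if EfE n t p = botE n then (1 : ℤ) else 0) := by
        refine Finset.sum_congr rfl fun p _ => ?_
        rw [← Finset.sum_filter]
        exact mobius_sum_le mu hmu (EfE n t p)
    _ = ((Finset.univ.filter (fun p : (Fin n → Fin t) × Fin t => EfE n t p = botE n)).card : ℤ) := by
        rw [Finset.card_filter]; push_cast; rfl
    _ = (t.descFactorial (n + 1) : ℤ) := by
        rw [← count_inj (n := n) t, Nat.card_eq_fintype_card, Fintype.card_subtype]

lemma poly_identity (mu : Emb n → Emb n → ℤ) (hmu : IsMobius mu) :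
    (∑ x : Emb n, C (mu (botE n) x) * X ^ (n + 1 - erank n x.val)) =
      descPochhammer ℤ (n + 1) := by
  apply Polynomial.eq_of_infinite_eval_eq
  have hinf := Set.infinite_range_of_injective
    (fun a b h => by exact_mod_cast h : Function.Injective (Nat.cast : ℕ → ℤ))
  refine hinf.mono ?_
  rintro z ⟨t, rfl⟩
  simp only [Set.mem_setOf_eq, eval_finset_sum, eval_mul, eval_C, eval_pow, eval_X]
  rw [eval_identity mu hmu t, descPochhammer_eval_eq_descFactorial]

end AuxWhitney4
theorem whitney_first (n : ℕ) (hn : 1 ≤ n) (k : ℕ) (hk : k ≤ n)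
    (mu : Emb n → Emb n → ℤ) (hmu : IsMobius mu) :
    ∑ᶠ x ∈ {x : Emb n | erank n x.val = k}, mu (botE n) x =
      (descPochhammer ℤ (n + 1)).coeff (n + 1 - k) := by
  classical
  have hpoly := poly_identity mu hmu
  have hcoeff : (descPochhammer ℤ (n + 1)).coeff (n + 1 - k) =
      ∑ x : Emb n, if erank n x.val = k then mu (botE n) x else 0 := by
    rw [← hpoly, Polynomial.finset_sum_coeff]
    refine Finset.sum_congr rfl fun x _ => ?_
    rw [Polynomial.coeff_C_mul, Polynomial.coeff_X_pow]
    have hle := erank_le (n := n) x.val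
    by_cases h : erank n x.val = k
    · rw [if_pos (by omega), if_pos h, mul_one]
    · rw [if_neg (by omega), if_neg h, mul_zero]
  have hset : {x : Emb n | erank n x.val = k} =
      ↑(Finset.univ.filter fun x : Emb n => erank n x.val = k) := by
    ext x; simp
  rw [hset, finsum_mem_coe_finset, Finset.sum_filter, hcoeff]
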